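/- Let μ be a capacity on [m], ε ∈ [0,1), k* ∈ G_{μ,ε} = { k ∈ [m] : μ(B) − ⋁_{A ⊆ B, |A| ≤ k} μ(A) ≤ ε for all nonempty B ⊆ [m] }, and let μ* be defined by μ*(B) = μ(B) if |B| ≤ k* and μ*(B) = ⋁_{A ⊆ B, |A| = k*} μ(A) otherwise. Let u ∈ [0,1]^m, σ a permutation with u_{σ(1)} ≤ ... ≤ u_{σ(m)}, A_{σ(p)} = {σ(p),...,σ(m)}, and suppose p ≤ m − k* and u_{σ(p)} ≤ μ(A_{σ(p)}) with S_μ(u) = u_{σ(p)}. Then S_μ(u) − S_{μ*}(u) ≤ ε. -/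

import Mathlib

/-- The minimum of `u` over a finite subset `A` (with the convention that the
minimum over the empty set is `1`, the top of the unit interval). -/
noncomputable def setMin {m : ℕ} (u : Fin m → ℝ) (A : Finset (Fin m)) : ℝ :=
  if h : A.Nonempty then A.inf' h u else 1

/-- The (discrete) Sugeno integral of `u : [m] → ℝ` with respect to the set
function `μ`, in disjunctive normal form:
`S_μ(u) = ⋁_{A ⊆ [m]} ((⋀_{j ∈ A} u j) ∧ μ A)`. -/
noncomputable def sugeno {m : ℕ} (μ : Finset (Fin m) → ℝ) (u : Fin m → ℝ) : ℝ :=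
  (Finset.univ : Finset (Finset (Fin m))).sup' Finset.univ_nonempty
    (fun A => min (setMin u A) (μ A))

/-- A capacity on `[m]`: a monotone set function with `μ ∅ = 0` and `μ [m] = 1`. -/
def IsCapacity {m : ℕ} (μ : Finset (Fin m) → ℝ) : Prop :=
  μ ∅ = 0 ∧ μ Finset.univ = 1 ∧
    ∀ A B : Finset (Fin m), A ⊆ B → μ A ≤ μ B

/-- The `k`-maxitive approximation `μ*` of `μ`:
`μ*(B) = μ(B)` if `|B| ≤ k`, and `μ*(B) = ⋁_{A ⊆ B, |A| = k} μ(A)` otherwise. -/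
noncomputable def muStar {m : ℕ} (μ : Finset (Fin m) → ℝ) (k : ℕ)
    (B : Finset (Fin m)) : ℝ :=
  if h : B.card ≤ k then μ B
  else
    (B.powerset.filter fun A => A.card = k).sup'
      (by
        obtain ⟨t, ht, htc⟩ := Finset.exists_subset_card_eq (le_of_not_ge h)
        exact ⟨t, Finset.mem_filter.mpr ⟨Finset.mem_powerset.mpr ht, htc⟩⟩) μ

/-- `⋁_{A ⊆ B, |A| ≤ k} μ(A)`: the maximum of `μ` over all subsets of `B` of
cardinality at most `k`. -/
noncomputable def approxSup {m : ℕ} (μ : Finset (Fin m) → ℝ) (k : ℕ)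
    (B : Finset (Fin m)) : ℝ :=
  (B.powerset.filter fun A => A.card ≤ k).sup' ⟨∅, by simp⟩ μ

/-- Case (1) of the stability theorem: if `k* ∈ G_{μ,ε}`, the arguments are
sorted as `u_{σ(1)} ≤ … ≤ u_{σ(m)}` with `A_{σ(p)} = {σ(p), …, σ(m)}` (the
index `p : Fin m` encodes the 1-based position `p + 1`), and `p` is a position
with `p ≤ m − k*`, `u_{σ(p)} ≤ μ(A_{σ(p)})` and `S_μ(u) = u_{σ(p)}`, then
`S_μ(u) − S_{μ*}(u) ≤ ε`. -/
theorem sugeno_muStar_diff_le_eps (m kstar : ℕ)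
    (μ : Finset (Fin m) → ℝ) (hμ : IsCapacity μ)
    (ε : ℝ) (hε0 : 0 ≤ ε) (hε1 : ε < 1)
    (hk : kstar ∈ Finset.Icc 1 m)
    (hkG : ∀ B : Finset (Fin m), B.Nonempty → μ B - approxSup μ kstar B ≤ ε)
    (u : Fin m → ℝ) (hu : ∀ i, 0 ≤ u i ∧ u i ≤ 1)
    (σ : Equiv.Perm (Fin m))
    (hσ : ∀ i j : Fin m, i ≤ j → u (σ i) ≤ u (σ j))
    (p : Fin m) (hp : (p : ℕ) + 1 ≤ m - kstar)
    (hcross : u (σ p) ≤ μ ((Finset.Ici p).image σ))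
    (hval : sugeno μ u = u (σ p)) :
    sugeno μ u - sugeno (muStar μ kstar) u ≤ ε := by
  obtain ⟨hμ0, hμ1, hμmono⟩ := hμ
  rw [Finset.mem_Icc] at hk
  set B : Finset (Fin m) := (Finset.Ici p).image σ with hB
  have hBcard : B.card = m - (p : ℕ) := by
    rw [hB, Finset.card_image_of_injective _ σ.injective, Fin.card_Ici]
  have hBgt : ¬ B.card ≤ kstar := by
    rw [hBcard]; omega
  have hBne : B.Nonempty := ⟨σ p, Finset.mem_image.mpr ⟨p, Finset.mem_Ici.mpr le_rfl, rfl⟩⟩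
  -- muStar at B
  have hne : ((B.powerset.filter fun A => A.card = kstar)).Nonempty := by
    obtain ⟨t, ht, htc⟩ := Finset.exists_subset_card_eq (le_of_not_ge hBgt)
    exact ⟨t, Finset.mem_filter.mpr ⟨Finset.mem_powerset.mpr ht, htc⟩⟩
  obtain ⟨A, hAmem, hAeq⟩ := Finset.exists_mem_eq_sup' hne μ
  rw [Finset.mem_filter, Finset.mem_powerset] at hAmem
  obtain ⟨hAB, hAcard⟩ := hAmem
  have hmuStarB : muStar μ kstar B = μ A := by
    rw [muStar, dif_neg hBgt, hAeq]
  -- approxSup ≤ muStar at B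
  have happrox : approxSup μ kstar B ≤ μ A := by
    apply Finset.sup'_le
    intro C hC
    rw [Finset.mem_filter, Finset.mem_powerset] at hC
    obtain ⟨C', hCC', hC'B, hC'card⟩ := Finset.exists_subsuperset_card_eq hC.1 hC.2
      (by omega)
    calc μ C ≤ μ C' := hμmono _ _ hCC'
      _ ≤ (B.powerset.filter fun A => A.card = kstar).sup' hne μ := by
          exact Finset.le_sup' μ (Finset.mem_filter.mpr ⟨Finset.mem_powerset.mpr hC'B, hC'card⟩)
      _ = μ A := hAeq
  have hdiff : μ B - μ A ≤ ε := le_trans (by linarith [hkG B hBne]) le_rfl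
  -- A is nonempty
  have hAne : A.Nonempty := Finset.card_pos.mp (by omega)
  -- setMin u A ≥ u (σ p)
  have hsetMin : u (σ p) ≤ setMin u A := by
    rw [setMin, dif_pos hAne]
    apply Finset.le_inf'
    intro a ha
    have haB : a ∈ B := hAB ha
    rw [hB, Finset.mem_image] at haB
    obtain ⟨j, hj, rfl⟩ := haB
    exact hσ p j (Finset.mem_Ici.mp hj)
  -- muStar at A equals μ A
  have hmuStarA : muStar μ kstar A = μ A := by
    rw [muStar, dif_pos (by omega)]
  -- lower bound on sugeno muStar
  have hlb : u (σ p) - ε ≤ sugeno (muStar μ kstar) u := by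
    have : min (setMin u A) (muStar μ kstar A) ≤ sugeno (muStar μ kstar) u := by
      unfold sugeno
      exact Finset.le_sup' (fun C => min (setMin u C) (muStar μ kstar C)) (Finset.mem_univ A)
    have hμA : u (σ p) - ε ≤ muStar μ kstar A := by
      rw [hmuStarA]; linarith
    calc u (σ p) - ε ≤ min (setMin u A) (muStar μ kstar A) :=
          le_min (by linarith) hμA
      _ ≤ _ := this
  rw [hval]; linarith
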